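/- Let V₈ = ℂ⁸ with standard basis v₁,…,v₈ and let η₆ := v₄∧v₅∧v₆ + v₁∧v₄∧v₇ + v₂∧v₅∧v₇ + v₂∧v₆∧v₈ + v₃∧v₅∧v₈ ∈ ⋀³V₈. For every (α, β) ∈ ℂ² ∖ {(0,0)}, setting U₂ := span{v₈, αv₄+βv₇} and U₅ := span{v₄, v₅, v₇, v₈, αv₂+βv₆}, one has η₆ ∈ U₂∧U₅∧V₈ + ⋀³U₅. In particular, there exist infinitely many pairs of subspaces (V₂, V₅) with dim V₂ = 2, dim V₅ = 5, V₂ ⊆ V₅ ⊆ V₈ and η₆ ∈ ⋀³V₅ + V₂∧V₅∧V₈. -/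

import Mathlib

open ExteriorAlgebra

noncomputable section

/-- `V₈ = ℂ⁸`. -/
abbrev V8 : Type := Fin 8 → ℂ

/-- The standard basis vectors of `ℂ⁸`; `v i` corresponds to `v_{i+1}` of the paper. -/
def v (i : Fin 8) : V8 := Pi.single i 1

/-- For subspaces `S, T, U` of `W = ℂ⁸`, the subspace `S∧T∧U` of `⋀³W`, realized as the span,
inside the exterior algebra, of all products `s∧t∧u` with `s ∈ S`, `t ∈ T`, `u ∈ U`.
In particular `wSpan S T ⊤ = S∧T∧V₈` and `wSpan S S S = ⋀³S`. -/
def wSpan (S T U : Submodule ℂ V8) : Submodule ℂ (ExteriorAlgebra ℂ V8) :=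
  Submodule.span ℂ {x | ∃ s ∈ S, ∃ t ∈ T, ∃ u ∈ U, x = ι ℂ s * ι ℂ t * ι ℂ u}

/-- The representative `η₆ = v₄∧v₅∧v₆ + v₁∧v₄∧v₇ + v₂∧v₅∧v₇ + v₂∧v₆∧v₈ + v₃∧v₅∧v₈`
of the open orbit of the orbit closure `Y₆ ⊂ ⋀³ℂ⁸` (with 0-based indices). -/
def η6 : ExteriorAlgebra ℂ V8 :=
  ι ℂ (v 3) * ι ℂ (v 4) * ι ℂ (v 5) + ι ℂ (v 0) * ι ℂ (v 3) * ι ℂ (v 6) +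
  ι ℂ (v 1) * ι ℂ (v 4) * ι ℂ (v 6) + ι ℂ (v 1) * ι ℂ (v 5) * ι ℂ (v 7) +
  ι ℂ (v 2) * ι ℂ (v 4) * ι ℂ (v 7)

lemma iswap (x y : V8) : ι ℂ x * ι ℂ y = -(ι ℂ y * ι ℂ x) :=
  eq_neg_of_add_eq_zero_left (ExteriorAlgebra.ι_add_mul_swap x y)

lemma swap12 (x y z : V8) : ι ℂ x * (ι ℂ y * ι ℂ z) = -(ι ℂ y * (ι ℂ x * ι ℂ z)) := by
  rw [← mul_assoc, ← mul_assoc, iswap x y, neg_mul]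

lemma swap23 (x y z : V8) : ι ℂ x * (ι ℂ y * ι ℂ z) = -(ι ℂ x * (ι ℂ z * ι ℂ y)) := by
  rw [iswap y z, mul_neg]

lemma cyc (x y z : V8) : ι ℂ x * (ι ℂ y * ι ℂ z) = ι ℂ z * (ι ℂ x * ι ℂ y) := by
  rw [swap23, swap12, neg_neg]

lemma swap13 (x y z : V8) : ι ℂ x * (ι ℂ y * ι ℂ z) = -(ι ℂ z * (ι ℂ y * ι ℂ x)) := by
  rw [swap12, cyc y x z]

/-- Membership of a generator in `wSpan`. -/
lemma mem_wSpan {S T U : Submodule ℂ V8} {s t u : V8} (hs : s ∈ S) (ht : t ∈ T) (hu : u ∈ U) :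
    ι ℂ s * ι ℂ t * ι ℂ u ∈ wSpan S T U :=
  Submodule.subset_span ⟨s, hs, t, ht, u, hu, rfl⟩

/-- Linear independence of vectors with an identity coordinate pattern. -/
lemma li_of_coords {n : ℕ} (b : Fin n → V8) (idx : Fin n → Fin 8)
    (h : ∀ i j, b i (idx j) = if i = j then 1 else 0) : LinearIndependent ℂ b := by
  rw [Fintype.linearIndependent_iff]
  intro g hg i
  have := congrFun hg (idx i)
  simpa [Finset.sum_apply, h, Finset.sum_ite_eq'] using this

/-- The key membership from the paper: for every `(α,β) ≠ (0,0)`,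
`η₆ ∈ U₂∧U₅∧V₈ + ⋀³U₅`. -/
lemma key (α β : ℂ) (h : (α, β) ≠ (0, 0)) :
    η6 ∈ wSpan (Submodule.span ℂ {v 7, α • v 3 + β • v 6})
            (Submodule.span ℂ {v 3, v 4, v 6, v 7, α • v 1 + β • v 5}) ⊤ ⊔
          wSpan (Submodule.span ℂ {v 3, v 4, v 6, v 7, α • v 1 + β • v 5})
            (Submodule.span ℂ {v 3, v 4, v 6, v 7, α • v 1 + β • v 5})
            (Submodule.span ℂ {v 3, v 4, v 6, v 7, α • v 1 + β • v 5}) := by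
  set u : V8 := α • v 3 + β • v 6 with hu
  set w : V8 := α • v 1 + β • v 5 with hw
  set U2 := Submodule.span ℂ ({v 7, u} : Set V8) with hU2
  set U5 := Submodule.span ℂ ({v 3, v 4, v 6, v 7, w} : Set V8) with hU5
  have h7 : v 7 ∈ U2 := Submodule.subset_span (by simp)
  have hu2 : u ∈ U2 := Submodule.subset_span (by simp)
  have h3 : v 3 ∈ U5 := Submodule.subset_span (by simp)
  have h4 : v 4 ∈ U5 := Submodule.subset_span (by simp)
  have h6 : v 6 ∈ U5 := Submodule.subset_span (by simp)
  have h7' : v 7 ∈ U5 := Submodule.subset_span (by simp)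
  have hw5 : w ∈ U5 := Submodule.subset_span (by simp)
  rw [Submodule.mem_sup]
  by_cases hα : α ≠ 0
  · refine ⟨-(ι ℂ (v 7) * ι ℂ (v 4) * ι ℂ (v 2))
        + α⁻¹ • (ι ℂ u * ι ℂ (v 6) * ι ℂ (v 0))
        + α⁻¹ • (ι ℂ (v 7) * ι ℂ w * ι ℂ (v 5))
        + α⁻¹ • (ι ℂ u * ι ℂ (v 4) * ι ℂ (v 5)), ?_,
      α⁻¹ • (ι ℂ w * ι ℂ (v 4) * ι ℂ (v 6)), ?_, ?_⟩
    · exact Submodule.add_mem _ (Submodule.add_mem _ (Submodule.add_mem _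
        (Submodule.neg_mem _ (mem_wSpan h7 h4 trivial))
        (Submodule.smul_mem _ _ (mem_wSpan hu2 h6 trivial)))
        (Submodule.smul_mem _ _ (mem_wSpan h7 hw5 trivial)))
        (Submodule.smul_mem _ _ (mem_wSpan hu2 h4 trivial))
    · exact Submodule.smul_mem _ _ (mem_wSpan hw5 h4 h6)
    · rw [hu, hw]
      simp only [η6, map_add, map_smul, add_mul, mul_add, smul_mul_assoc, mul_smul_comm,
        smul_add, smul_smul, mul_assoc, ExteriorAlgebra.ι_sq_zero, mul_zero, smul_zero,
        zero_mul, add_zero, zero_add]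
      rw [swap13 (v 7) (v 4) (v 2), cyc (v 3) (v 6) (v 0), (cyc (v 1) (v 5) (v 7)).symm,
        (cyc (v 4) (v 5) (v 6)).symm, swap12 (v 5) (v 4) (v 6)]
      match_scalars <;> field_simp <;> ring
  · push_neg at hα
    have hβ : β ≠ 0 := by
      rintro rfl; exact h (by simp [hα])
    refine ⟨-(ι ℂ (v 7) * ι ℂ (v 4) * ι ℂ (v 2))
        - β⁻¹ • (ι ℂ u * ι ℂ (v 3) * ι ℂ (v 0))
        - β⁻¹ • (ι ℂ (v 7) * ι ℂ w * ι ℂ (v 1))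
        - β⁻¹ • (ι ℂ u * ι ℂ (v 4) * ι ℂ (v 1)), ?_,
      β⁻¹ • (ι ℂ w * ι ℂ (v 3) * ι ℂ (v 4)), ?_, ?_⟩
    · exact Submodule.sub_mem _ (Submodule.sub_mem _ (Submodule.sub_mem _
        (Submodule.neg_mem _ (mem_wSpan h7 h4 trivial))
        (Submodule.smul_mem _ _ (mem_wSpan hu2 h3 trivial)))
        (Submodule.smul_mem _ _ (mem_wSpan h7 hw5 trivial)))
        (Submodule.smul_mem _ _ (mem_wSpan hu2 h4 trivial))
    · exact Submodule.smul_mem _ _ (mem_wSpan hw5 h3 h4)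
    · rw [hu, hw]
      simp only [η6, map_add, map_smul, add_mul, mul_add, smul_mul_assoc, mul_smul_comm,
        smul_add, smul_smul, mul_assoc, sub_eq_add_neg, neg_add, smul_neg, neg_neg,
        ExteriorAlgebra.ι_sq_zero, mul_zero, smul_zero, zero_mul, add_zero, zero_add, neg_zero]
      rw [swap13 (v 7) (v 4) (v 2), swap13 (v 6) (v 3) (v 0), swap13 (v 7) (v 5) (v 1),
        cyc (v 3) (v 4) (v 1), swap13 (v 6) (v 4) (v 1), (cyc (v 3) (v 4) (v 5)).symm]
      match_scalars <;> field_simp <;> ring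

theorem rational_curve_of_flags_over_η6 :
    (∀ α β : ℂ, (α, β) ≠ (0, 0) →
      η6 ∈ wSpan (Submodule.span ℂ {v 7, α • v 3 + β • v 6})
              (Submodule.span ℂ {v 3, v 4, v 6, v 7, α • v 1 + β • v 5}) ⊤ ⊔
            wSpan (Submodule.span ℂ {v 3, v 4, v 6, v 7, α • v 1 + β • v 5})
              (Submodule.span ℂ {v 3, v 4, v 6, v 7, α • v 1 + β • v 5})
              (Submodule.span ℂ {v 3, v 4, v 6, v 7, α • v 1 + β • v 5})) ∧
    {P : Submodule ℂ V8 × Submodule ℂ V8 |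
      Module.finrank ℂ P.1 = 2 ∧ Module.finrank ℂ P.2 = 5 ∧ P.1 ≤ P.2 ∧
      η6 ∈ wSpan P.2 P.2 P.2 ⊔ wSpan P.1 P.2 ⊤}.Infinite := by
  refine ⟨fun α β h => key α β h, ?_⟩
  refine Set.infinite_of_injective_forall_mem
    (f := fun β : ℂ =>
      ((Submodule.span ℂ {v 7, (1:ℂ) • v 3 + β • v 6} : Submodule ℂ V8),
       (Submodule.span ℂ {v 3, v 4, v 6, v 7, (1:ℂ) • v 1 + β • v 5} : Submodule ℂ V8)))
    ?_ ?_
  · -- injectivity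
    intro β β' hff
    have h2 := congrArg Prod.snd hff
    simp only at h2
    have hmem : (1:ℂ) • v 1 + β • v 5 ∈
        Submodule.span ℂ ({v 3, v 4, v 6, v 7, (1:ℂ) • v 1 + β' • v 5} : Set V8) := by
      rw [← h2]; exact Submodule.subset_span (by simp)
    -- functional : x ↦ x 5 - β' * x 1 vanishes on the span
    set φ : V8 →ₗ[ℂ] ℂ := (LinearMap.proj (5 : Fin 8)) - β' • (LinearMap.proj (1 : Fin 8))
      with hφ
    have hker : Submodule.span ℂ ({v 3, v 4, v 6, v 7, (1:ℂ) • v 1 + β' • v 5} : Set V8)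
        ≤ LinearMap.ker φ := by
      rw [Submodule.span_le]
      rintro x hx
      simp only [Set.mem_insert_iff, Set.mem_singleton_iff] at hx
      rcases hx with rfl | rfl | rfl | rfl | rfl <;>
        simp [hφ, v, Pi.single_apply]
    have := hker hmem
    simp only [LinearMap.mem_ker, hφ, LinearMap.sub_apply, LinearMap.smul_apply,
      LinearMap.proj_apply, Pi.add_apply, Pi.smul_apply, v, Pi.single_apply] at this
    simp only [show ((5:Fin 8) = 1) ↔ False from by decide,
      show ((1:Fin 8) = 5) ↔ False from by decide, if_false, if_true,
      smul_eq_mul, mul_one, mul_zero, one_mul, add_zero, zero_add] at this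
    have h' : β - β' = 0 := by linear_combination this
    linear_combination h'
  · -- membership
    intro β
    refine ⟨?_, ?_, ?_, ?_⟩
    · -- finrank 2
      show Module.finrank ℂ
        (Submodule.span ℂ ({v 7, (1:ℂ) • v 3 + β • v 6} : Set V8)) = 2
      have hli : LinearIndependent ℂ ![v 7, (1:ℂ) • v 3 + β • v 6] := by
        apply li_of_coords _ ![7, 3]
        intro i j
        fin_cases i <;> fin_cases j <;>
          simp [v, Pi.single_apply, Matrix.vecHead, Matrix.vecTail]
      have hset : Set.range ![v 7, (1:ℂ) • v 3 + β • v 6]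
          = ({v 7, (1:ℂ) • v 3 + β • v 6} : Set V8) := by
        ext x; simp; tauto
      rw [← hset]
      simpa using finrank_span_eq_card (R := ℂ) hli
    · -- finrank 5
      show Module.finrank ℂ
        (Submodule.span ℂ ({v 3, v 4, v 6, v 7, (1:ℂ) • v 1 + β • v 5} : Set V8)) = 5
      have hli : LinearIndependent ℂ ![v 3, v 4, v 6, v 7, (1:ℂ) • v 1 + β • v 5] := by
        apply li_of_coords _ ![3, 4, 6, 7, 1]
        intro i j
        fin_cases i <;> fin_cases j <;>
          simp [v, Pi.single_apply, Matrix.vecHead, Matrix.vecTail]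
      have hset : Set.range ![v 3, v 4, v 6, v 7, (1:ℂ) • v 1 + β • v 5]
          = ({v 3, v 4, v 6, v 7, (1:ℂ) • v 1 + β • v 5} : Set V8) := by
        ext x; simp; tauto
      rw [← hset]
      simpa using finrank_span_eq_card (R := ℂ) hli
    · -- inclusion
      show Submodule.span ℂ ({v 7, (1:ℂ) • v 3 + β • v 6} : Set V8)
        ≤ Submodule.span ℂ ({v 3, v 4, v 6, v 7, (1:ℂ) • v 1 + β • v 5} : Set V8)
      rw [Submodule.span_le]
      rintro x hx
      simp only [Set.mem_insert_iff, Set.mem_singleton_iff] at hx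
      rcases hx with rfl | rfl
      · exact Submodule.subset_span (by simp)
      · exact Submodule.add_mem _
          (Submodule.smul_mem _ _ (Submodule.subset_span (by simp)))
          (Submodule.smul_mem _ _ (Submodule.subset_span (by simp)))
    · -- η6 membership
      show η6 ∈ wSpan (Submodule.span ℂ ({v 3, v 4, v 6, v 7, (1:ℂ) • v 1 + β • v 5} : Set V8))
          (Submodule.span ℂ ({v 3, v 4, v 6, v 7, (1:ℂ) • v 1 + β • v 5} : Set V8))
          (Submodule.span ℂ ({v 3, v 4, v 6, v 7, (1:ℂ) • v 1 + β • v 5} : Set V8)) ⊔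
        wSpan (Submodule.span ℂ ({v 7, (1:ℂ) • v 3 + β • v 6} : Set V8))
          (Submodule.span ℂ ({v 3, v 4, v 6, v 7, (1:ℂ) • v 1 + β • v 5} : Set V8)) ⊤
      rw [sup_comm]
      exact key 1 β (by simp)
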